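/- Let V → X → Y be a Markov chain where V is uniform on {-1,1}^d with independent coordinates, X ∈ {-1,1}^d has independent coordinates with P(X_j = V_j | V) = (1+δ)/2, and Y is any discrete random variable depending only on X. If α = log((1+δ)/(1-δ)), then I(V; Y) ≤ 2·(e^{2α} - 1)²·I(X; Y). -/

import Mathlib

open MeasureTheory ProbabilityTheory

/-- The probability of an event, as a real number. -/
noncomputable def pr {Ω : Type*} [MeasurableSpace Ω] (μ : Measure Ω) (s : Set Ω) : ℝ :=
  (μ s).toReal

/-- Mutual information (in nats) between two finitely-valued random variables. -/
noncomputable def mutualInfo {Ω A B : Type*} [MeasurableSpace Ω] [Fintype A] [Fintype B]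
    (μ : Measure Ω) (U : Ω → A) (W : Ω → B) : ℝ :=
  ∑ a : A, ∑ b : B, pr μ {ω | U ω = a ∧ W ω = b} *
    Real.log (pr μ {ω | U ω = a ∧ W ω = b} /
      (pr μ {ω | U ω = a} * pr μ {ω | W ω = b}))

/-- Shannon entropy (in nats) of a finitely-valued random variable. -/
noncomputable def entropy {Ω A : Type*} [MeasurableSpace Ω] [Fintype A]
    (μ : Measure Ω) (U : Ω → A) : ℝ :=
  -∑ a : A, pr μ {ω | U ω = a} * Real.log (pr μ {ω | U ω = a})

/-- Conditional mutual information `I(U; W | Z)` for finitely-valued random variables. -/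
noncomputable def condMutualInfo {Ω A B C : Type*} [MeasurableSpace Ω]
    [Fintype A] [Fintype B] [Fintype C]
    (μ : Measure Ω) (U : Ω → A) (W : Ω → B) (Z : Ω → C) : ℝ :=
  ∑ c : C, pr μ {ω | Z ω = c} * mutualInfo (μ[|{ω | Z ω = c}]) U W




section AuxSDPI

open Finset


noncomputable def phiF (t : ℝ) : ℝ := t * Real.log t

noncomputable def PhiF {B : Type*} [Fintype B] (f : B → ℝ) : ℝ :=
  (∑ b, phiF (f b)) - phiF (∑ b, f b) + (∑ b, f b) * Real.log (Fintype.card B)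

lemma phiF_zero : phiF 0 = 0 := by simp [phiF]

lemma phiF_one : phiF 1 = 0 := by simp [phiF]

lemma phiF_mul {t u : ℝ} (ht : 0 < t) (hu : 0 ≤ u) :
    phiF (t * u) = t * phiF u + t * u * Real.log t := by
  rcases eq_or_lt_of_le hu with h | h
  · simp [phiF, ← h]
  · unfold phiF
    rw [Real.log_mul (ne_of_gt ht) (ne_of_gt h)]
    ring

lemma PhiF_zero {B : Type*} [Fintype B] : PhiF (fun _ : B => (0:ℝ)) = 0 := by
  simp [PhiF, phiF]

lemma PhiF_smul {B : Type*} [Fintype B] {t : ℝ} (ht : 0 ≤ t) {f : B → ℝ}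
    (hf : ∀ b, 0 ≤ f b) : PhiF (fun b => t * f b) = t * PhiF f := by
  rcases eq_or_lt_of_le ht with h | h
  · simp [← h, PhiF_zero, PhiF, phiF]
  · unfold PhiF
    rw [← Finset.mul_sum]
    rw [phiF_mul h (Finset.sum_nonneg fun b _ => hf b)]
    have : ∀ b ∈ Finset.univ, phiF (t * f b) = t * phiF (f b) + t * f b * Real.log t :=
      fun b _ => phiF_mul h (hf b)
    rw [Finset.sum_congr rfl this, Finset.sum_add_distrib, ← Finset.mul_sum, ← Finset.sum_mul,
      ← Finset.mul_sum]
    ring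

lemma phiF_div {s x : ℝ} (hs : 0 < s) (hx : 0 ≤ x) :
    s * phiF (x / s) = phiF x - x * Real.log s := by
  rcases eq_or_lt_of_le hx with h | h
  · simp [phiF, ← h]
  · unfold phiF
    rw [Real.log_div (ne_of_gt h) (ne_of_gt hs)]
    field_simp

lemma PhiF_add_le {B : Type*} [Fintype B] {f g : B → ℝ}
    (hf : ∀ b, 0 ≤ f b) (hg : ∀ b, 0 ≤ g b) :
    PhiF (fun b => f b + g b) ≤ PhiF f + PhiF g := by
  set sf := ∑ b, f b with hsf
  set sg := ∑ b, g b with hsg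
  have hsf0 : 0 ≤ sf := Finset.sum_nonneg fun b _ => hf b
  have hsg0 : 0 ≤ sg := Finset.sum_nonneg fun b _ => hg b
  rcases eq_or_lt_of_le hsf0 with h0 | hsfpos
  · have hf0 : ∀ b, f b = 0 := fun b =>
      (Finset.sum_eq_zero_iff_of_nonneg (fun b _ => hf b)).1 h0.symm b (Finset.mem_univ b)
    have h1 : (fun b => f b + g b) = g := by funext b; simp [hf0 b]
    have h2 : f = (fun _ : B => (0:ℝ)) := by funext b; simp [hf0 b]
    rw [h1, h2, PhiF_zero]; linarith
  rcases eq_or_lt_of_le hsg0 with h0 | hsgpos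
  · have hg0 : ∀ b, g b = 0 := fun b =>
      (Finset.sum_eq_zero_iff_of_nonneg (fun b _ => hg b)).1 h0.symm b (Finset.mem_univ b)
    have h1 : (fun b => f b + g b) = f := by funext b; simp [hg0 b]
    have h2 : g = (fun _ : B => (0:ℝ)) := by funext b; simp [hg0 b]
    rw [h1, h2, PhiF_zero]; linarith
  set S := sf + sg with hS
  have hSpos : 0 < S := by positivity
  have esum : ∑ b, (f b + g b) = S := by rw [hS, hsf, hsg, ← Finset.sum_add_distrib]
  have key : ∀ b, phiF (f b + g b) ≤
      (sf * phiF (f b / sf) + sg * phiF (g b / sg)) + (f b + g b) * Real.log S := by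
    intro b
    have hfb := hf b
    have hgb := hg b
    have hmix : f b + g b = S * ((sf / S) * (f b / sf) + (sg / S) * (g b / sg)) := by
      field_simp
    have hconv := Real.convexOn_mul_log.2 (Set.mem_Ici.2 (by positivity : (0:ℝ) ≤ f b / sf))
      (Set.mem_Ici.2 (by positivity : (0:ℝ) ≤ g b / sg))
      (by positivity : (0:ℝ) ≤ sf / S) (by positivity : (0:ℝ) ≤ sg / S)
      (by field_simp; exact hS.symm)
    have hconv' : phiF ((sf / S) * (f b / sf) + (sg / S) * (g b / sg)) ≤
        (sf / S) * phiF (f b / sf) + (sg / S) * phiF (g b / sg) := by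
      simpa [phiF, smul_eq_mul] using hconv
    have hmnn : 0 ≤ (sf / S) * (f b / sf) + (sg / S) * (g b / sg) := by positivity
    calc phiF (f b + g b)
        = S * phiF ((sf / S) * (f b / sf) + (sg / S) * (g b / sg))
          + S * ((sf / S) * (f b / sf) + (sg / S) * (g b / sg)) * Real.log S := by
          rw [hmix, phiF_mul hSpos hmnn]
      _ ≤ S * ((sf / S) * phiF (f b / sf) + (sg / S) * phiF (g b / sg))
          + (f b + g b) * Real.log S := by
          have h2 : S * ((sf / S) * (f b / sf) + (sg / S) * (g b / sg)) = f b + g b := by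
            field_simp
          rw [h2]
          have := mul_le_mul_of_nonneg_left hconv' (le_of_lt hSpos)
          linarith
      _ = (sf * phiF (f b / sf) + sg * phiF (g b / sg)) + (f b + g b) * Real.log S := by
          field_simp
  have hsum : ∑ b, phiF (f b + g b) ≤
      ∑ b, ((sf * phiF (f b / sf) + sg * phiF (g b / sg)) + (f b + g b) * Real.log S) :=
    Finset.sum_le_sum (fun b _ => key b)
  have e2 : ∑ b, sf * phiF (f b / sf) = (∑ b, phiF (f b)) - sf * Real.log sf := by
    rw [Finset.sum_congr rfl (fun b _ => phiF_div hsfpos (hf b)), Finset.sum_sub_distrib,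
      ← Finset.sum_mul, ← hsf]
  have e3 : ∑ b, sg * phiF (g b / sg) = (∑ b, phiF (g b)) - sg * Real.log sg := by
    rw [Finset.sum_congr rfl (fun b _ => phiF_div hsgpos (hg b)), Finset.sum_sub_distrib,
      ← Finset.sum_mul, ← hsg]
  have e4 : ∑ b, (f b + g b) * Real.log S = S * Real.log S := by
    rw [← Finset.sum_mul, esum]
  rw [Finset.sum_add_distrib, Finset.sum_add_distrib, e2, e3, e4] at hsum
  unfold PhiF
  rw [esum, ← hsf, ← hsg]
  have hphiS : phiF S = S * Real.log S := rfl
  have hphisf : phiF sf = sf * Real.log sf := rfl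
  have hphisg : phiF sg = sg * Real.log sg := rfl
  have hL : S * Real.log (Fintype.card B) =
      sf * Real.log (Fintype.card B) + sg * Real.log (Fintype.card B) := by rw [hS]; ring
  linarith

lemma PhiF_mixture {ι B : Type*} [Fintype B] (s : Finset ι) (w : ι → ℝ) (h : ι → B → ℝ)
    (hw : ∀ i, 0 ≤ w i) (hh : ∀ i b, 0 ≤ h i b) :
    PhiF (fun b => ∑ i ∈ s, w i * h i b) ≤ ∑ i ∈ s, w i * PhiF (h i) := by
  classical
  induction s using Finset.induction_on with
  | empty => simp [PhiF_zero]
  | insert a t hni ih =>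
    have e1 : (fun b => ∑ i ∈ insert a t, w i * h i b)
        = fun b => (w a * h a b) + ∑ i ∈ t, w i * h i b := by
      funext b; rw [Finset.sum_insert hni]
    rw [e1, Finset.sum_insert hni]
    have h1 : PhiF (fun b => w a * h a b + ∑ i ∈ t, w i * h i b) ≤
        PhiF (fun b => w a * h a b) + PhiF (fun b => ∑ i ∈ t, w i * h i b) :=
      PhiF_add_le (fun b => mul_nonneg (hw a) (hh a b))
        (fun b => Finset.sum_nonneg fun i _ => mul_nonneg (hw i) (hh i b))
    have h2 : PhiF (fun b => w a * h a b) = w a * PhiF (h a) := PhiF_smul (hw a) (hh a)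
    linarith

lemma PhiF_comp_equiv {A B : Type*} [Fintype A] [Fintype B] (e : A ≃ B) (f : B → ℝ) :
    PhiF f = PhiF (f ∘ e) := by
  unfold PhiF
  rw [Fintype.card_congr e, ← Equiv.sum_comp e (fun b => phiF (f b)),
    ← Equiv.sum_comp e f]
  rfl

lemma PhiF_unique {B : Type*} [Fintype B] [Unique B] (f : B → ℝ) : PhiF f = 0 := by
  unfold PhiF
  rw [Fintype.sum_unique, Fintype.sum_unique, Fintype.card_unique]
  simp

lemma PhiF_prod {A B : Type*} [Fintype A] [Fintype B] [Nonempty A] [Nonempty B]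
    (f : A × B → ℝ) :
    PhiF f = PhiF (fun a => ∑ b, f (a, b)) + ∑ a, PhiF (fun b => f (a, b)) := by
  unfold PhiF
  rw [Fintype.sum_prod_type, Fintype.card_prod]
  have hlog : Real.log ((Fintype.card A * Fintype.card B : ℕ) : ℝ)
      = Real.log (Fintype.card A) + Real.log (Fintype.card B) := by
    push_cast
    rw [Real.log_mul (Nat.cast_ne_zero.mpr Fintype.card_pos.ne')
      (Nat.cast_ne_zero.mpr Fintype.card_pos.ne')]
  rw [hlog, Fintype.sum_prod_type (f := f)]
  simp only [Finset.sum_add_distrib, Finset.sum_sub_distrib, ← Finset.sum_mul]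
  ring

lemma mul_log_le {u : ℝ} (hu : 0 ≤ u) : u * Real.log u ≤ u * u - u := by
  rcases eq_or_lt_of_le hu with h | h
  · simp [← h]
  · nlinarith [Real.log_le_sub_one_of_pos h]

lemma mul_log_ge {u : ℝ} (hu : 0 ≤ u) : u - 1 ≤ u * Real.log u := by
  rcases eq_or_lt_of_le hu with h | h
  · simp [← h]
  · have h1 := Real.one_sub_inv_le_log_of_pos h
    have h2 : u * (1 - u⁻¹) ≤ u * Real.log u := mul_le_mul_of_nonneg_left h1 hu
    have h3 : u * (1 - u⁻¹) = u - 1 := by field_simp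
    linarith

lemma Hupper {t : ℝ} (h1 : -1 ≤ t) (h2 : t ≤ 1) :
    (1 + t) * Real.log (1 + t) + (1 - t) * Real.log (1 - t) ≤ 2 * t ^ 2 := by
  have a1 := mul_log_le (by linarith : (0:ℝ) ≤ 1 + t)
  have a2 := mul_log_le (by linarith : (0:ℝ) ≤ 1 - t)
  nlinarith

lemma Hlower {σ : ℝ} (h1 : -1 ≤ σ) (h2 : σ ≤ 1) :
    σ ^ 2 ≤ 16 * ((1 + σ) * Real.log (1 + σ) + (1 - σ) * Real.log (1 - σ)) := by
  have key : ∀ τ : ℝ, 0 ≤ τ → τ ≤ 1 →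
        τ ^ 2 ≤ 16 * ((1 + τ) * Real.log (1 + τ) + (1 - τ) * Real.log (1 - τ)) := by
      intro τ ht0 ht1
      have hlow : -τ ≤ (1 - τ) * Real.log (1 - τ) := by
        have := mul_log_ge (by linarith : (0:ℝ) ≤ 1 - τ)
        linarith
      set r := Real.sqrt (1 + τ) with hr
      have hrsq : r ^ 2 = 1 + τ := Real.sq_sqrt (by linarith)
      have hr1 : 1 ≤ r := by
        rw [show (1:ℝ) = Real.sqrt 1 by rw [Real.sqrt_one]]
        exact Real.sqrt_le_sqrt (by linarith)
      have hrpos : 0 < r := by linarith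
      have hlogr : 1 - r⁻¹ ≤ Real.log r := Real.one_sub_inv_le_log_of_pos hrpos
      have hlog1τ : Real.log (1 + τ) = 2 * Real.log r := by
        rw [← hrsq, Real.log_pow]; push_cast; ring
      have hup : 2 * r ^ 2 - 2 * r ≤ (1 + τ) * Real.log (1 + τ) := by
        rw [hlog1τ, ← hrsq]
        have e1 : r ^ 2 * (1 - r⁻¹) = r ^ 2 - r := by field_simp
        nlinarith [mul_le_mul_of_nonneg_left hlogr (by positivity : (0:ℝ) ≤ 2 * r ^ 2)]
      have hK : 0 ≤ 2 + τ - τ ^ 2 / 16 := by nlinarith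
      have hsq : (2 * r) ^ 2 ≤ (2 + τ - τ ^ 2 / 16) ^ 2 := by nlinarith [hrsq]
      have h2r : 2 * r ≤ 2 + τ - τ ^ 2 / 16 := by nlinarith [hsq, hK, hrpos]
      nlinarith [hup, hlow, hrsq]
  rcases le_or_gt 0 σ with hσ | hσ
  · exact key σ hσ h2
  · have := key (-σ) (by linarith) (by linarith)
    have e1 : 1 + -σ = 1 - σ := by ring
    have e2 : 1 - -σ = 1 + σ := by ring
    rw [e1, e2, neg_sq] at this
    linarith

lemma Hcontract {δ σ c : ℝ} (hδ0 : 0 ≤ δ) (hδ1 : δ ≤ 1) (h1 : -1 ≤ σ) (h2 : σ ≤ 1)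
    (hc : 32 * δ ^ 2 ≤ c) :
    (1 + δ * σ) * Real.log (1 + δ * σ) + (1 - δ * σ) * Real.log (1 - δ * σ) ≤
      c * ((1 + σ) * Real.log (1 + σ) + (1 - σ) * Real.log (1 - σ)) := by
  have ht1 : -1 ≤ δ * σ := by nlinarith
  have ht2 : δ * σ ≤ 1 := by nlinarith
  have hu := Hupper ht1 ht2
  have hl := Hlower h1 h2
  nlinarith [hl, hu, sq_nonneg σ, sq_nonneg δ]

lemma PhiF_bool (f : Bool → ℝ) :
    PhiF f = (phiF (f true) + phiF (f false)) - phiF (f true + f false)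
      + (f true + f false) * Real.log 2 := by
  unfold PhiF
  rw [Fintype.sum_bool, Fintype.sum_bool, Fintype.card_bool]
  norm_num

lemma phiF_half {s u : ℝ} (hs : 0 < s) (hu : 0 ≤ u) :
    phiF (s * u / 2) = (s / 2) * (u * Real.log u) + (s * u / 2) * Real.log s
      - (s * u / 2) * Real.log 2 := by
  rcases eq_or_lt_of_le hu with h | h
  · simp [phiF, ← h]
  · unfold phiF
    rw [show s * u / 2 = s * u / 2 from rfl, Real.log_div (by positivity) (by norm_num),
      Real.log_mul (ne_of_gt hs) (ne_of_gt h)]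
    ring

lemma PhiF_site {δ c : ℝ} (hδ0 : 0 ≤ δ) (hδ1 : δ ≤ 1) (hc : 32 * δ ^ 2 ≤ c)
    (p : Bool → ℝ) (hp : ∀ b, 0 ≤ p b) :
    PhiF (fun v => ∑ x, (if x = v then (1 + δ) / 2 else (1 - δ) / 2) * p x) ≤ c * PhiF p := by
  have hx := hp true
  have hy := hp false
  set x := p true with hxdef
  set y := p false with hydef
  have hc0 : (0:ℝ) ≤ c := le_trans (by positivity) hc
  rw [PhiF_bool, PhiF_bool]
  have e1 : (∑ z : Bool, (if z = true then (1 + δ) / 2 else (1 - δ) / 2) * p z)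
      = (1 + δ) / 2 * x + (1 - δ) / 2 * y := by
    rw [Fintype.sum_bool]; norm_num; try ring
  have e2 : (∑ z : Bool, (if z = false then (1 + δ) / 2 else (1 - δ) / 2) * p z)
      = (1 - δ) / 2 * x + (1 + δ) / 2 * y := by
    rw [Fintype.sum_bool]; norm_num; try ring
  rw [e1, e2, ← hxdef, ← hydef]
  rcases eq_or_lt_of_le (by positivity : (0:ℝ) ≤ x + y) with hs | hs
  · have hx0 : x = 0 := by linarith
    have hy0 : y = 0 := by linarith
    rw [hx0, hy0]
    simp [phiF]
  · set s := x + y with hsdef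
    set σ := (x - y) / s with hσdef
    have hσ1 : -1 ≤ σ := by
      rw [hσdef, le_div_iff₀ hs]; nlinarith
    have hσ2 : σ ≤ 1 := by
      rw [hσdef, div_le_one hs]; nlinarith
    have hxe : x = s * (1 + σ) / 2 := by
      rw [hσdef]; field_simp; ring
    have hye : y = s * (1 - σ) / 2 := by
      rw [hσdef]; field_simp; ring
    have hAe : (1 + δ) / 2 * x + (1 - δ) / 2 * y = s * (1 + δ * σ) / 2 := by
      rw [hxe, hye]; ring
    have hBe : (1 - δ) / 2 * x + (1 + δ) / 2 * y = s * (1 - δ * σ) / 2 := by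
      rw [hxe, hye]; ring
    have hAB : (1 + δ) / 2 * x + (1 - δ) / 2 * y + ((1 - δ) / 2 * x + (1 + δ) / 2 * y) = s := by
      ring
    rw [hAB, hAe, hBe]
    rw [phiF_half hs (by nlinarith : (0:ℝ) ≤ 1 + δ * σ),
      phiF_half hs (by nlinarith : (0:ℝ) ≤ 1 - δ * σ)]
    rw [hxe, hye]
    rw [phiF_half hs (by linarith : (0:ℝ) ≤ 1 + σ), phiF_half hs (by linarith : (0:ℝ) ≤ 1 - σ)]
    have hH := Hcontract hδ0 hδ1 hσ1 hσ2 hc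
    have hs2 : 0 ≤ s / 2 := by linarith
    have := mul_le_mul_of_nonneg_left hH hs2
    rw [show phiF s = s * Real.log s from rfl]
    linarith [this]

lemma PhiF_step {A B : Type*} [Fintype A] [Fintype B] [Nonempty A] [Nonempty B]
    {c : ℝ} (hc : 0 ≤ c)
    (M : A → A → ℝ) (N : B → B → ℝ)
    (hM0 : ∀ a a', 0 ≤ M a a') (hN0 : ∀ b b', 0 ≤ N b b')
    (hMcol : ∀ a, ∑ a', M a' a = 1) (hNcol : ∀ b, ∑ b', N b' b = 1)
    (hMc : ∀ p : A → ℝ, (∀ a, 0 ≤ p a) → PhiF (fun a' => ∑ a, M a' a * p a) ≤ c * PhiF p)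
    (hNc : ∀ p : B → ℝ, (∀ b, 0 ≤ p b) → PhiF (fun b' => ∑ b, N b' b * p b) ≤ c * PhiF p)
    (f : A × B → ℝ) (hf : ∀ q, 0 ≤ f q) :
    PhiF (fun q : A × B => ∑ p : A × B, M q.1 p.1 * N q.2 p.2 * f p) ≤ c * PhiF f := by
  classical
  set W : A × B → ℝ := fun q => ∑ p : A × B, M q.1 p.1 * N q.2 p.2 * f p with hW
  set nf : A → B → ℝ := fun a b' => ∑ b, N b' b * f (a, b) with hnf
  have hnf0 : ∀ a b', 0 ≤ nf a b' := fun a b' =>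
    Finset.sum_nonneg fun b _ => mul_nonneg (hN0 b' b) (hf (a, b))
  have hfA : ∀ a, 0 ≤ ∑ b, f (a, b) := fun a => Finset.sum_nonneg fun b _ => hf (a, b)
  have hslice : ∀ a' b', W (a', b') = ∑ a, M a' a * nf a b' := by
    intro a' b'
    show (∑ p : A × B, M a' p.1 * N b' p.2 * f p) = ∑ a, M a' a * ∑ b, N b' b * f (a, b)
    rw [Fintype.sum_prod_type]
    exact Finset.sum_congr rfl fun a _ => by
      rw [Finset.mul_sum]
      exact Finset.sum_congr rfl fun b _ => by ring
  have hmarg : ∀ a', (∑ b', W (a', b')) = ∑ a, M a' a * ∑ b, f (a, b) := by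
    intro a'
    calc ∑ b', W (a', b') = ∑ b', ∑ a, M a' a * nf a b' :=
          Finset.sum_congr rfl fun b' _ => hslice a' b'
      _ = ∑ a, ∑ b', M a' a * nf a b' := Finset.sum_comm
      _ = ∑ a, M a' a * ∑ b, f (a, b) := by
          refine Finset.sum_congr rfl fun a _ => ?_
          rw [← Finset.mul_sum]
          congr 1
          show (∑ b', ∑ b, N b' b * f (a, b)) = ∑ b, f (a, b)
          rw [Finset.sum_comm]
          exact Finset.sum_congr rfl fun b _ => by
            rw [← Finset.sum_mul, hNcol b, one_mul]
  have hm2 : PhiF (fun a' => ∑ b', W (a', b')) ≤ c * PhiF (fun a => ∑ b, f (a, b)) := by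
    have he : (fun a' => ∑ b', W (a', b'))
        = (fun a' => ∑ a, M a' a * (fun a2 => ∑ b, f (a2, b)) a) := funext hmarg
    rw [he]
    exact hMc _ hfA
  have hslice2 : ∀ a', PhiF (fun b' => W (a', b')) ≤ ∑ a, M a' a * PhiF (nf a) := by
    intro a'
    rw [show (fun b' => W (a', b')) = fun b' => ∑ a, M a' a * nf a b' from funext (hslice a')]
    exact PhiF_mixture Finset.univ (M a') nf (hM0 a') hnf0
  have hnfc : ∀ a, PhiF (nf a) ≤ c * PhiF (fun b => f (a, b)) := by
    intro a
    exact hNc (fun b => f (a, b)) (fun b => hf (a, b))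
  have hsum1 : (∑ a', PhiF (fun b' => W (a', b'))) ≤ ∑ a', ∑ a, M a' a * PhiF (nf a) :=
    Finset.sum_le_sum fun a' _ => hslice2 a'
  have hsum2 : (∑ a' : A, ∑ a, M a' a * PhiF (nf a)) = ∑ a, PhiF (nf a) := by
    rw [Finset.sum_comm]
    exact Finset.sum_congr rfl fun a _ => by rw [← Finset.sum_mul, hMcol a, one_mul]
  have hsum3 : (∑ a, PhiF (nf a)) ≤ ∑ a, c * PhiF (fun b => f (a, b)) :=
    Finset.sum_le_sum fun a _ => hnfc a
  have hPW : PhiF W = PhiF (fun a => ∑ b, W (a, b)) + ∑ a, PhiF (fun b => W (a, b)) :=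
    PhiF_prod W
  have hPf : PhiF f = PhiF (fun a => ∑ b, f (a, b)) + ∑ a, PhiF (fun b => f (a, b)) :=
    PhiF_prod f
  have hmulsum : c * (∑ a, PhiF (fun b => f (a, b))) = ∑ a, c * PhiF (fun b => f (a, b)) :=
    Finset.mul_sum _ _ _
  calc PhiF W = PhiF (fun a => ∑ b, W (a, b)) + ∑ a, PhiF (fun b => W (a, b)) := hPW
    _ ≤ c * PhiF (fun a => ∑ b, f (a, b)) + ∑ a, c * PhiF (fun b => f (a, b)) := by
        have := le_trans hsum1 (le_of_eq hsum2)
        linarith [le_trans this hsum3, hm2]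
    _ = c * PhiF f := by rw [hPf]; linarith [hmulsum]

lemma sum_pi_bool : ∀ (d : ℕ) (g : Fin d → Bool → ℝ),
    (∑ v : Fin d → Bool, ∏ j, g j (v j)) = ∏ j, (g j true + g j false) := by
  intro d
  induction d with
  | zero => intro g; simp
  | succ d ih =>
    intro g
    rw [← Equiv.sum_comp (Fin.consEquiv fun _ => Bool) (fun v => ∏ j, g j (v j))]
    rw [Fintype.sum_prod_type]
    have key : ∀ (b : Bool) (t : Fin d → Bool),
        (∏ j, g j (((Fin.consEquiv fun _ => Bool) (b, t)) j))
          = g 0 b * ∏ j : Fin d, g j.succ (t j) := by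
      intro b t
      rw [Fin.prod_univ_succ]
      congr 1
    calc (∑ b : Bool, ∑ t : Fin d → Bool, ∏ j, g j (((Fin.consEquiv fun _ => Bool) (b, t)) j))
        = ∑ b : Bool, ∑ t : Fin d → Bool, g 0 b * ∏ j : Fin d, g j.succ (t j) := by
          exact Finset.sum_congr rfl fun b _ => Finset.sum_congr rfl fun t _ => key b t
      _ = (g 0 true + g 0 false) * ∏ j : Fin d, (g j.succ true + g j.succ false) := by
          rw [Fintype.sum_bool]
          rw [← Finset.mul_sum, ← Finset.mul_sum, ih (fun j => g j.succ)]
          ring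
      _ = ∏ j, (g j true + g j false) := by rw [Fin.prod_univ_succ]

lemma PhiF_tensor {δ c : ℝ} (hδ0 : 0 ≤ δ) (hδ1 : δ ≤ 1) (hc : 32 * δ ^ 2 ≤ c) :
    ∀ (d : ℕ) (a : (Fin d → Bool) → ℝ), (∀ x, 0 ≤ a x) →
    PhiF (fun v : Fin d → Bool => ∑ x : Fin d → Bool,
        (∏ j, if x j = v j then (1 + δ) / 2 else (1 - δ) / 2) * a x)
      ≤ c * PhiF a := by
  intro d
  induction d with
  | zero =>
    intro a ha
    simp only [PhiF_unique, mul_zero]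
    exact le_rfl
  | succ d ih =>
    intro a ha
    set e : Bool × (Fin d → Bool) ≃ (Fin (d + 1) → Bool) := Fin.consEquiv fun _ => Bool with he
    set L : (Fin (d + 1) → Bool) → ℝ :=
      fun v : Fin (d + 1) → Bool => ∑ x : Fin (d + 1) → Bool,
        (∏ j, if x j = v j then (1 + δ) / 2 else (1 - δ) / 2) * a x with hL
    rw [PhiF_comp_equiv e L, PhiF_comp_equiv e a]
    set M : Bool → Bool → ℝ := fun v₀ x₀ => if x₀ = v₀ then (1 + δ) / 2 else (1 - δ) / 2
      with hM
    set N : (Fin d → Bool) → (Fin d → Bool) → ℝ :=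
      fun v' x' => ∏ j, if x' j = v' j then (1 + δ) / 2 else (1 - δ) / 2 with hN
    have hcomp : (L ∘ e) = fun q : Bool × (Fin d → Bool) =>
        ∑ p : Bool × (Fin d → Bool), M q.1 p.1 * N q.2 p.2 * (a ∘ e) p := by
      funext q
      show L (e q) = _
      rw [hL]
      simp only
      rw [← Equiv.sum_comp e
        (fun x => (∏ j, if x j = (e q) j then (1 + δ) / 2 else (1 - δ) / 2) * a x)]
      refine Finset.sum_congr rfl fun p _ => ?_
      congr 1
      rw [Fin.prod_univ_succ]
      congr 1
    rw [hcomp]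
    have hM0 : ∀ a a', 0 ≤ M a a' := by
      intro a a'; rw [hM]; dsimp only; split <;> linarith
    have hN0 : ∀ b b', 0 ≤ N b b' := by
      intro b b'; rw [hN]; dsimp only
      exact Finset.prod_nonneg fun j _ => by split <;> linarith
    have hMcol : ∀ b, ∑ b', M b' b = 1 := by
      intro b; rw [Fintype.sum_bool, hM]; dsimp only; cases b <;> norm_num <;> ring
    have hNcol : ∀ x, ∑ v, N v x = 1 := by
      intro x
      rw [hN]
      dsimp only
      have h2 : (∑ v : Fin d → Bool, ∏ j, if x j = v j then (1 + δ) / 2 else (1 - δ) / 2)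
          = ∏ j : Fin d, ((if x j = true then (1 + δ) / 2 else (1 - δ) / 2)
            + (if x j = false then (1 + δ) / 2 else (1 - δ) / 2)) :=
        sum_pi_bool d (fun j b => if x j = b then (1 + δ) / 2 else (1 - δ) / 2)
      rw [h2]
      rw [Finset.prod_congr rfl (fun j _ => ?_), Finset.prod_const_one]
      cases hxj : x j <;> norm_num <;> ring
    have hMc : ∀ p : Bool → ℝ, (∀ a, 0 ≤ p a) →
        PhiF (fun a' => ∑ a, M a' a * p a) ≤ c * PhiF p := by
      intro p hp
      exact PhiF_site hδ0 hδ1 hc p hp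
    have hNc : ∀ p : (Fin d → Bool) → ℝ, (∀ b, 0 ≤ p b) →
        PhiF (fun b' => ∑ b, N b' b * p b) ≤ c * PhiF p := by
      intro p hp
      have := ih p hp
      have he2 : (fun b' : Fin d → Bool => ∑ b, N b' b * p b)
          = fun v : Fin d → Bool => ∑ x : Fin d → Bool,
            (∏ j, if x j = v j then (1 + δ) / 2 else (1 - δ) / 2) * p x := rfl
      rw [he2]
      exact this
    exact PhiF_step (le_trans (by positivity) hc) M N hM0 hN0 hMcol hNcol hMc hNc (a ∘ e)
      (fun q => ha (e q))

lemma measure_piece_add {Ω ι : Type*} [MeasurableSpace Ω] [Fintype ι]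
    (μ : Measure Ω) [IsProbabilityMeasure μ]
    (A s : ι → Set Ω) (hsub : ∀ i, s i ⊆ A i) (hcover : ∀ ω, ∃ i, ω ∈ A i)
    (hAsum : ∑ i, μ (A i) = 1) : μ (⋃ i, s i) = ∑ i, μ (s i) := by
  classical
  set B : ι → Set Ω := fun i => toMeasurable μ (A i) with hB
  have hBm : ∀ i, MeasurableSet (B i) := fun i => measurableSet_toMeasurable μ (A i)
  have hABsub : ∀ i, A i ⊆ B i := fun i => subset_toMeasurable μ (A i)
  have hBμ : ∀ i, μ (B i) = μ (A i) := fun i => measure_toMeasurable (A i)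
  have hBsum : ∑ i, μ (B i) = 1 := by rw [Finset.sum_congr rfl fun i _ => hBμ i]; exact hAsum
  have huniv : μ (⋃ i, B i) = 1 := by
    refine le_antisymm ?_ ?_
    · calc μ (⋃ i, B i) ≤ μ Set.univ := measure_mono (Set.subset_univ _)
        _ = 1 := measure_univ
    · calc (1:ENNReal) = μ Set.univ := measure_univ.symm
        _ ≤ μ (⋃ i, B i) := by
            refine measure_mono fun ω _ => ?_
            obtain ⟨i, hi⟩ := hcover ω
            exact Set.mem_iUnion.2 ⟨i, hABsub i hi⟩
  have hnull : ∀ i j, i ≠ j → μ (B i ∩ B j) = 0 := by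
    intro i j hij
    have hsub2 : (⋃ k, B k) ⊆ (B i ∪ B j) ∪ (⋃ k ∈ (Finset.univ.erase i).erase j, B k) := by
      intro ω hω
      obtain ⟨k, hk⟩ := Set.mem_iUnion.1 hω
      by_cases hki : k = i
      · exact Or.inl (Or.inl (hki ▸ hk))
      by_cases hkj : k = j
      · exact Or.inl (Or.inr (hkj ▸ hk))
      · exact Or.inr (Set.mem_biUnion (Finset.mem_erase.2 ⟨hkj, Finset.mem_erase.2 ⟨hki,
          Finset.mem_univ k⟩⟩) hk)
    have h1 : μ (⋃ k, B k) + μ (B i ∩ B j) ≤ ∑ k, μ (B k) := by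
      calc μ (⋃ k, B k) + μ (B i ∩ B j)
          ≤ (μ (B i ∪ B j) + μ (⋃ k ∈ (Finset.univ.erase i).erase j, B k)) + μ (B i ∩ B j) := by
            exact add_le_add (le_trans (measure_mono hsub2) (measure_union_le _ _)) le_rfl
        _ ≤ (μ (B i ∪ B j) + ∑ k ∈ (Finset.univ.erase i).erase j, μ (B k)) + μ (B i ∩ B j) := by
            exact add_le_add (add_le_add le_rfl (measure_biUnion_finset_le _ _)) le_rfl
        _ = (∑ k ∈ (Finset.univ.erase i).erase j, μ (B k)) + (μ (B i ∪ B j) + μ (B i ∩ B j)) := by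
            ring
        _ = ((∑ k ∈ (Finset.univ.erase i).erase j, μ (B k)) + μ (B j)) + μ (B i) := by
            rw [measure_union_add_inter (μ := μ) (B i) (hBm j)]; ring
        _ = ∑ k, μ (B k) := by
            rw [Finset.sum_erase_add _ _ (Finset.mem_erase.2 ⟨hij.symm, Finset.mem_univ j⟩),
              Finset.sum_erase_add _ _ (Finset.mem_univ i)]
    rw [huniv, hBsum] at h1
    have h2 : (1:ENNReal) + μ (B i ∩ B j) ≤ 1 + 0 := by rw [add_zero]; exact h1
    exact le_antisymm ((ENNReal.add_le_add_iff_left (by norm_num)).1 h2) zero_le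
  set C : ι → Set Ω := fun i => B i \ ⋃ (j : ι) (_ : j ≠ i), B j with hC
  have hCm : ∀ i, MeasurableSet (C i) :=
    fun i => (hBm i).diff (MeasurableSet.iUnion fun j => MeasurableSet.iUnion fun _ => hBm j)
  have hCdisj : ∀ i j, i ≠ j → ∀ ω, ω ∈ C i → ω ∉ C j := by
    intro i j hij ω hωi hωj
    have h1 : ω ∈ B i := hωi.1
    exact hωj.2 (Set.mem_iUnion.2 ⟨i, Set.mem_iUnion.2 ⟨hij, h1⟩⟩)
  have hsC0 : ∀ i, μ (s i \ C i) = 0 := by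
    intro i
    have hsub3 : s i \ C i ⊆ ⋃ (j : ι) (_ : j ≠ i), B i ∩ B j := by
      intro ω hω
      have hωB : ω ∈ B i := hABsub i (hsub i hω.1)
      have : ω ∉ C i := hω.2
      rw [hC] at this
      simp only [Set.mem_diff, not_and, not_not] at this
      obtain ⟨j, hj⟩ := Set.mem_iUnion.1 (this hωB)
      obtain ⟨hji, hωj⟩ := Set.mem_iUnion.1 hj
      exact Set.mem_iUnion.2 ⟨j, Set.mem_iUnion.2 ⟨hji, ⟨hωB, hωj⟩⟩⟩
    refine le_antisymm ?_ zero_le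
    calc μ (s i \ C i) ≤ μ (⋃ (j : ι) (_ : j ≠ i), B i ∩ B j) := measure_mono hsub3
      _ ≤ ∑' (j : ι), μ (⋃ (_ : j ≠ i), B i ∩ B j) := measure_iUnion_le _
      _ = ∑' (j : ι), 0 := by
          refine tsum_congr fun j => ?_
          by_cases hj : j = i
          · subst hj; simp
          · rw [Set.iUnion_eq_if, if_pos hj]; exact hnull i j (fun h => hj h.symm)
      _ = 0 := by simp
  have hsCeq : ∀ i, μ (s i ∩ C i) = μ (s i) := by
    intro i
    refine le_antisymm (measure_mono Set.inter_subset_left) ?_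
    calc μ (s i) ≤ μ (s i ∩ C i) + μ (s i \ C i) := measure_le_inter_add_diff μ _ _
      _ = μ (s i ∩ C i) := by rw [hsC0 i, add_zero]
  have hlower : ∀ F : Finset ι, ∑ i ∈ F, μ (s i ∩ C i) ≤ μ (⋃ i ∈ F, (s i ∩ C i)) := by
    intro F
    induction F using Finset.induction_on with
    | empty => simp
    | insert a F hni ih =>
      rw [Finset.sum_insert hni]
      have hsplit := measure_inter_add_diff (μ := μ) (⋃ i ∈ insert a F, (s i ∩ C i)) (hCm a)
      have h1 : μ (s a ∩ C a) ≤ μ ((⋃ i ∈ insert a F, (s i ∩ C i)) ∩ C a) := by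
        refine measure_mono fun ω hω => ⟨?_, hω.2⟩
        exact Set.mem_biUnion (Finset.mem_insert_self a F) hω
      have h2 : μ (⋃ i ∈ F, (s i ∩ C i)) ≤ μ ((⋃ i ∈ insert a F, (s i ∩ C i)) \ C a) := by
        refine measure_mono fun ω hω => ?_
        obtain ⟨i, hiF, hωi⟩ := Set.mem_iUnion₂.1 hω
        have hia : i ≠ a := fun h => hni (h ▸ hiF)
        exact ⟨Set.mem_biUnion (Finset.mem_insert_of_mem hiF) hωi,
          hCdisj i a hia ω hωi.2⟩
      calc μ (s a ∩ C a) + ∑ i ∈ F, μ (s i ∩ C i)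
          ≤ μ ((⋃ i ∈ insert a F, (s i ∩ C i)) ∩ C a)
            + μ ((⋃ i ∈ insert a F, (s i ∩ C i)) \ C a) :=
            add_le_add h1 (le_trans ih h2)
        _ = μ (⋃ i ∈ insert a F, (s i ∩ C i)) := hsplit
  refine le_antisymm ?_ ?_
  · have : (⋃ i, s i) = ⋃ i ∈ (Finset.univ : Finset ι), s i := by simp
    rw [this]
    exact measure_biUnion_finset_le _ _
  · calc ∑ i, μ (s i) = ∑ i, μ (s i ∩ C i) := by
          exact Finset.sum_congr rfl fun i _ => (hsCeq i).symm
      _ ≤ μ (⋃ i ∈ (Finset.univ : Finset ι), (s i ∩ C i)) := hlower Finset.univ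
      _ ≤ μ (⋃ i, s i) := by
          refine measure_mono ?_
          intro ω hω
          obtain ⟨i, _, hωi⟩ := Set.mem_iUnion₂.1 hω
          exact Set.mem_iUnion.2 ⟨i, hωi.1⟩

lemma sum_log_eq_PhiF {B : Type*} [Fintype B] [Nonempty B] (f : B → ℝ) (h0 : ∀ b, 0 ≤ f b)
    (D : ℝ) (hD : D = ((Fintype.card B : ℝ))⁻¹ * ∑ b, f b) :
    ∑ b, f b * Real.log (f b / D) = PhiF f := by
  have hcard : (0:ℝ) < (Fintype.card B : ℝ) := by exact_mod_cast Fintype.card_pos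
  have hS0 : 0 ≤ ∑ b, f b := Finset.sum_nonneg fun b _ => h0 b
  rcases eq_or_lt_of_le hS0 with hS | hS
  · have hf0 : ∀ b, f b = 0 := fun b =>
      (Finset.sum_eq_zero_iff_of_nonneg (fun b _ => h0 b)).1 hS.symm b (Finset.mem_univ b)
    rw [show f = (fun _ : B => (0:ℝ)) from funext hf0, PhiF_zero]
    simp
  · have hD0 : 0 < D := by rw [hD]; positivity
    have key : ∀ b, f b * Real.log (f b / D)
        = phiF (f b) - f b * Real.log D := by
      intro b
      rcases eq_or_lt_of_le (h0 b) with h | h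
      · simp [phiF, ← h]
      · rw [Real.log_div (ne_of_gt h) (ne_of_gt hD0)]; unfold phiF; ring
    rw [Finset.sum_congr rfl fun b _ => key b, Finset.sum_sub_distrib, ← Finset.sum_mul]
    have hlogD : Real.log D = Real.log (∑ b, f b) - Real.log (Fintype.card B) := by
      rw [hD, Real.log_mul (by positivity) (ne_of_gt hS), Real.log_inv]
      ring
    rw [hlogD]
    unfold PhiF phiF
    ring

end AuxSDPI

open Finset

/-- Quantitative data-processing inequality for the binary symmetric channel: for the
Markov chain `V → X → Y` with `V` uniform on `{-1,1}^d`, `P(X_j = V_j | V) = (1+δ)/2`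
independently across coordinates, and `α = log((1+δ)/(1-δ))`,
`I(V; Y) ≤ 2(e^{2α} - 1)²·I(X; Y)`. -/
theorem stmt10 {Ω 𝒴 : Type*} [MeasurableSpace Ω] [Fintype 𝒴] {d : ℕ}
    (μ : Measure Ω) [IsProbabilityMeasure μ]
    (δ α : ℝ) (hδ0 : 0 ≤ δ) (hδ1 : δ < 1)
    (hα : α = Real.log ((1 + δ) / (1 - δ)))
    (V X : Ω → Fin d → Bool) (Y : Ω → 𝒴)
    (huniform : ∀ v, pr μ {ω | V ω = v} = (1 / 2) ^ d)
    (hchannel : ∀ v x, pr μ {ω | V ω = v ∧ X ω = x} =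
      (1 / 2) ^ d * ∏ j, (if x j = v j then (1 + δ) / 2 else (1 - δ) / 2))
    (hmarkov : ∀ (v x : Fin d → Bool) (y : 𝒴),
      pr μ {ω | V ω = v ∧ X ω = x ∧ Y ω = y} * pr μ {ω | X ω = x} =
        pr μ {ω | V ω = v ∧ X ω = x} * pr μ {ω | X ω = x ∧ Y ω = y}) :
    mutualInfo μ V Y ≤ 2 * (Real.exp (2 * α) - 1) ^ 2 * mutualInfo μ X Y := by
  classical
  set c : ℝ := 2 * (Real.exp (2 * α) - 1) ^ 2 with hcdef
  -- the constant dominates 32 δ²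
  have hδ1' : (0:ℝ) < 1 - δ := by linarith
  have hδp : (0:ℝ) < 1 + δ := by linarith
  have ht0 : (0:ℝ) < (1 + δ) / (1 - δ) := by positivity
  have hexp : Real.exp (2 * α) = ((1 + δ) / (1 - δ)) ^ 2 := by
    rw [two_mul, Real.exp_add, hα, Real.exp_log ht0]
    ring
  have hc : 32 * δ ^ 2 ≤ c := by
    rw [hcdef, hexp]
    have ht : 1 + 2 * δ ≤ (1 + δ) / (1 - δ) := by
      rw [le_div_iff₀ hδ1']
      nlinarith
    have ht1 : (1:ℝ) ≤ (1 + δ) / (1 - δ) := by nlinarith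
    have ht2 : (1 + 2*δ)^2 ≤ ((1 + δ) / (1 - δ))^2 := by nlinarith
    nlinarith [sq_nonneg δ, sq_nonneg ((1 + δ) / (1 - δ) + 1 + 2*δ)]
  -- basic notation
  set W : (Fin d → Bool) → (Fin d → Bool) → ℝ :=
    fun v x => ∏ j, if x j = v j then (1 + δ) / 2 else (1 - δ) / 2 with hWdef
  have hW0 : ∀ v x, 0 ≤ W v x := fun v x =>
    Finset.prod_nonneg fun j _ => by split <;> linarith
  have hWcol : ∀ x, ∑ v, W v x = 1 := by
    intro x
    have h2 : (∑ v : Fin d → Bool, ∏ j, if x j = v j then (1 + δ) / 2 else (1 - δ) / 2)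
        = ∏ j : Fin d, ((if x j = true then (1 + δ) / 2 else (1 - δ) / 2)
          + (if x j = false then (1 + δ) / 2 else (1 - δ) / 2)) :=
      sum_pi_bool d (fun j b => if x j = b then (1 + δ) / 2 else (1 - δ) / 2)
    rw [hWdef]
    dsimp only
    rw [h2, Finset.prod_congr rfl (fun j _ => ?_), Finset.prod_const_one]
    cases hxj : x j <;> norm_num <;> ring
  have hWrow : ∀ v, ∑ x, W v x = 1 := by
    intro v
    have h2 : (∑ x : Fin d → Bool, ∏ j, (fun (j : Fin d) (b : Bool) =>
          if b = v j then (1 + δ) / 2 else (1 - δ) / 2) j (x j))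
        = ∏ j : Fin d, ((if true = v j then (1 + δ) / 2 else (1 - δ) / 2)
          + (if false = v j then (1 + δ) / 2 else (1 - δ) / 2)) :=
      sum_pi_bool d (fun j b => if b = v j then (1 + δ) / 2 else (1 - δ) / 2)
    rw [hWdef]
    dsimp only
    rw [h2, Finset.prod_congr rfl (fun j _ => ?_), Finset.prod_const_one]
    cases hxj : v j <;> norm_num <;> ring
  set A : ((Fin d → Bool) × (Fin d → Bool)) → Set Ω :=
    fun p => {ω | V ω = p.1 ∧ X ω = p.2} with hAdef
  have hcover : ∀ ω, ∃ p, ω ∈ A p := fun ω => ⟨(V ω, X ω), ⟨rfl, rfl⟩⟩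
  have hpow : ((1:ℝ)/2)^d ≠ 0 := by positivity
  have hApr : ∀ p, pr μ (A p) = (1/2)^d * W p.1 p.2 := fun p => hchannel p.1 p.2
  have hAsumR : ∑ p, pr μ (A p) = 1 := by
    rw [Finset.sum_congr rfl fun p _ => hApr p]
    rw [Fintype.sum_prod_type]
    have : ∀ v : Fin d → Bool, (∑ x : Fin d → Bool, (1/2)^d * W v x) = (1/2)^d := by
      intro v; rw [← Finset.mul_sum, hWrow v, mul_one]
    rw [Finset.sum_congr rfl fun v _ => this v, Finset.sum_const, Finset.card_univ]
    have hcard : (Fintype.card (Fin d → Bool)) = 2 ^ d := by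
      rw [Fintype.card_fun, Fintype.card_bool, Fintype.card_fin]
    rw [hcard, nsmul_eq_mul]
    push_cast
    rw [← mul_pow]
    norm_num
  have hAsum : ∑ p, μ (A p) = 1 := by
    rw [← ENNReal.toReal_eq_one_iff]
    rw [ENNReal.toReal_sum (fun p _ => measure_ne_top μ _)]
    exact hAsumR
  have happ : ∀ s : ((Fin d → Bool) × (Fin d → Bool)) → Set Ω, (∀ p, s p ⊆ A p) →
      pr μ (⋃ p, s p) = ∑ p, pr μ (s p) := by
    intro s hs
    unfold pr
    rw [measure_piece_add μ A s hs hcover hAsum,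
      ENNReal.toReal_sum (fun p _ => measure_ne_top μ _)]
  -- marginal of X
  have hpx : ∀ x, pr μ {ω | X ω = x} = (1/2)^d := by
    intro x
    have hs : ∀ p : (Fin d → Bool) × (Fin d → Bool),
        (if p.2 = x then A p else ∅) ⊆ A p := by
      intro p; split; exacts [Set.Subset.rfl, Set.empty_subset _]
    have hun : (⋃ p, if p.2 = x then A p else ∅) = {ω | X ω = x} := by
      ext ω
      constructor
      · intro hω
        obtain ⟨p, hp⟩ := Set.mem_iUnion.1 hω
        by_cases h : p.2 = x
        · rw [if_pos h] at hp; exact h ▸ hp.2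
        · rw [if_neg h] at hp; exact absurd hp (Set.notMem_empty ω)
      · intro hω
        exact Set.mem_iUnion.2 ⟨(V ω, x), by rw [if_pos rfl]; exact ⟨rfl, hω⟩⟩
    have := happ _ hs
    rw [hun] at this
    rw [this]
    have hterm : ∀ p : (Fin d → Bool) × (Fin d → Bool),
        pr μ (if p.2 = x then A p else ∅) = if p.2 = x then pr μ (A p) else 0 := by
      intro p; split <;> simp [pr]
    rw [Finset.sum_congr rfl fun p _ => hterm p, Fintype.sum_prod_type]
    have hinner : ∀ v, (∑ x' : Fin d → Bool, if x' = x then pr μ (A (v, x')) else 0)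
        = pr μ (A (v, x)) := by
      intro v
      rw [Finset.sum_ite_eq' Finset.univ x (fun x' => pr μ (A (v, x')))]
      simp
    rw [Finset.sum_congr rfl fun v _ => hinner v]
    rw [Finset.sum_congr rfl fun v _ => hApr (v, x), ← Finset.mul_sum]
    rw [show (∑ v, W v x) = 1 from hWcol x, mul_one]
  -- triple probabilities
  have hr : ∀ v x y, pr μ {ω | V ω = v ∧ X ω = x ∧ Y ω = y}
      = W v x * pr μ {ω | X ω = x ∧ Y ω = y} := by
    intro v x y
    have h := hmarkov v x y
    rw [hpx x, hchannel v x] at h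
    have h2 : ((1:ℝ)/2)^d * pr μ {ω | V ω = v ∧ X ω = x ∧ Y ω = y}
        = (1/2)^d * (W v x * pr μ {ω | X ω = x ∧ Y ω = y}) := by
      rw [hWdef]; dsimp only; linarith [h]
    exact mul_left_cancel₀ hpow h2
  -- joint of V and Y
  have hpvy : ∀ v y, pr μ {ω | V ω = v ∧ Y ω = y}
      = ∑ x, W v x * pr μ {ω | X ω = x ∧ Y ω = y} := by
    intro v y
    have hs : ∀ p : (Fin d → Bool) × (Fin d → Bool),
        (if p.1 = v then {ω | V ω = p.1 ∧ X ω = p.2 ∧ Y ω = y} else ∅) ⊆ A p := by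
      intro p
      split
      · intro ω hω; exact ⟨hω.1, hω.2.1⟩
      · exact Set.empty_subset _
    have hun : (⋃ p : (Fin d → Bool) × (Fin d → Bool),
        if p.1 = v then {ω | V ω = p.1 ∧ X ω = p.2 ∧ Y ω = y} else ∅)
        = {ω | V ω = v ∧ Y ω = y} := by
      ext ω
      constructor
      · intro hω
        obtain ⟨p, hp⟩ := Set.mem_iUnion.1 hω
        by_cases h : p.1 = v
        · rw [if_pos h] at hp; exact ⟨h ▸ hp.1, hp.2.2⟩
        · rw [if_neg h] at hp; exact absurd hp (Set.notMem_empty ω)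
      · intro hω
        exact Set.mem_iUnion.2 ⟨(v, X ω), by rw [if_pos rfl]; exact ⟨hω.1, rfl, hω.2⟩⟩
    have := happ _ hs
    rw [hun] at this
    rw [this]
    have hterm : ∀ p : (Fin d → Bool) × (Fin d → Bool),
        pr μ (if p.1 = v then {ω | V ω = p.1 ∧ X ω = p.2 ∧ Y ω = y} else ∅)
          = if p.1 = v then pr μ {ω | V ω = p.1 ∧ X ω = p.2 ∧ Y ω = y} else 0 := by
      intro p; split <;> simp [pr]
    rw [Finset.sum_congr rfl fun p _ => hterm p, Fintype.sum_prod_type]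
    have houter : ∀ v' : Fin d → Bool,
        (∑ x : Fin d → Bool, if v' = v then pr μ {ω | V ω = v' ∧ X ω = x ∧ Y ω = y} else 0)
        = if v' = v then (∑ x : Fin d → Bool, pr μ {ω | V ω = v' ∧ X ω = x ∧ Y ω = y})
          else 0 := by
      intro v'; split
      · rfl
      · exact Finset.sum_const_zero
    rw [Finset.sum_congr rfl fun v' _ => houter v']
    rw [Finset.sum_ite_eq' Finset.univ v
      (fun v' => ∑ x : Fin d → Bool, pr μ {ω | V ω = v' ∧ X ω = x ∧ Y ω = y})]
    simp only [Finset.mem_univ, if_true]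
    exact Finset.sum_congr rfl fun x _ => hr v x y
  -- marginal of Y
  have hpy : ∀ y, pr μ {ω | Y ω = y} = ∑ x, pr μ {ω | X ω = x ∧ Y ω = y} := by
    intro y
    have hs : ∀ p : (Fin d → Bool) × (Fin d → Bool),
        {ω | V ω = p.1 ∧ X ω = p.2 ∧ Y ω = y} ⊆ A p := by
      intro p ω hω; exact ⟨hω.1, hω.2.1⟩
    have hun : (⋃ p : (Fin d → Bool) × (Fin d → Bool),
        {ω | V ω = p.1 ∧ X ω = p.2 ∧ Y ω = y}) = {ω | Y ω = y} := by
      ext ω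
      constructor
      · intro hω
        obtain ⟨p, hp⟩ := Set.mem_iUnion.1 hω
        exact hp.2.2
      · intro hω
        exact Set.mem_iUnion.2 ⟨(V ω, X ω), rfl, rfl, hω⟩
    have := happ _ hs
    rw [hun] at this
    rw [this, Fintype.sum_prod_type]
    have hin : ∀ v, (∑ x : Fin d → Bool, pr μ {ω | V ω = v ∧ X ω = x ∧ Y ω = y})
        = ∑ x : Fin d → Bool, W v x * pr μ {ω | X ω = x ∧ Y ω = y} :=
      fun v => Finset.sum_congr rfl fun x _ => hr v x y
    rw [Finset.sum_congr rfl fun v _ => hin v, Finset.sum_comm]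
    refine Finset.sum_congr rfl fun x _ => ?_
    rw [← Finset.sum_mul, hWcol x, one_mul]
  -- nonnegativity of pr
  have hpr0 : ∀ s : Set Ω, 0 ≤ pr μ s := fun s => ENNReal.toReal_nonneg
  -- card of the cube
  have hcardC : ((Fintype.card (Fin d → Bool) : ℝ)) = 2 ^ d := by
    rw [Fintype.card_fun, Fintype.card_bool, Fintype.card_fin]
    push_cast
    ring
  have hinvC : ((Fintype.card (Fin d → Bool) : ℝ))⁻¹ = (1/2 : ℝ)^d := by
    rw [hcardC, one_div, inv_pow]
  -- rewrite I(V;Y)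
  have hVY : mutualInfo μ V Y
      = ∑ y : 𝒴, PhiF (fun v : Fin d → Bool =>
          ∑ x : Fin d → Bool, W v x * pr μ {ω | X ω = x ∧ Y ω = y}) := by
    unfold mutualInfo
    rw [Finset.sum_comm]
    refine Finset.sum_congr rfl fun y _ => ?_
    have hterm : ∀ v, pr μ {ω | V ω = v ∧ Y ω = y} *
        Real.log (pr μ {ω | V ω = v ∧ Y ω = y} /
          (pr μ {ω | V ω = v} * pr μ {ω | Y ω = y}))
        = (∑ x, W v x * pr μ {ω | X ω = x ∧ Y ω = y}) *
          Real.log ((∑ x, W v x * pr μ {ω | X ω = x ∧ Y ω = y}) /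
            ((1/2)^d * ∑ x, pr μ {ω | X ω = x ∧ Y ω = y})) := by
      intro v
      rw [hpvy v y, huniform v, hpy y]
    rw [Finset.sum_congr rfl fun v _ => hterm v]
    refine sum_log_eq_PhiF _ (fun v => Finset.sum_nonneg fun x _ =>
      mul_nonneg (hW0 v x) (hpr0 _)) _ ?_
    rw [hinvC]
    congr 1
    rw [Finset.sum_comm]
    refine (Finset.sum_congr rfl fun x _ => ?_).symm
    rw [← Finset.sum_mul, hWcol x, one_mul]
  -- rewrite I(X;Y)
  have hXY : mutualInfo μ X Y
      = ∑ y : 𝒴, PhiF (fun x : Fin d → Bool => pr μ {ω | X ω = x ∧ Y ω = y}) := by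
    unfold mutualInfo
    rw [Finset.sum_comm]
    refine Finset.sum_congr rfl fun y _ => ?_
    have hterm : ∀ x, pr μ {ω | X ω = x ∧ Y ω = y} *
        Real.log (pr μ {ω | X ω = x ∧ Y ω = y} /
          (pr μ {ω | X ω = x} * pr μ {ω | Y ω = y}))
        = pr μ {ω | X ω = x ∧ Y ω = y} *
          Real.log (pr μ {ω | X ω = x ∧ Y ω = y} /
            ((1/2)^d * ∑ x', pr μ {ω | X ω = x' ∧ Y ω = y})) := by
      intro x
      rw [hpx x, hpy y]
    rw [Finset.sum_congr rfl fun x _ => hterm x]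
    refine sum_log_eq_PhiF _ (fun x => hpr0 _) _ ?_
    rw [hinvC]
  -- finish
  rw [hVY, hXY, Finset.mul_sum]
  refine Finset.sum_le_sum fun y _ => ?_
  have := PhiF_tensor hδ0 (le_of_lt hδ1) hc d
    (fun x : Fin d → Bool => pr μ {ω | X ω = x ∧ Y ω = y}) (fun x => hpr0 _)
  rw [hWdef]
  exact this
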